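/- arXiv:2003.09174 — 4 statements merged into one kernel-verified Lean document; each statement's English description precedes it below -/
import Mathlib

section
/- Let f be strongly self-concordant with constant M ≥ 0, i.e., ∇²f(y) - ∇²f(x) ⪯ M‖y-x‖_z ∇²f(w) for all x,y,z,w, where ‖h‖_z = ⟨∇²f(z)h,h⟩^{1/2}. Then for any x, y with r = ‖y-x‖_x: (a) ∇²f(x)/(1+Mr) ⪯ ∇²f(y) ⪯ (1+Mr)∇²f(x); (b) for J = ∫₀¹ ∇²f(x + t(y-x))dt, one has ∇²f(x)/(1+Mr/2) ⪯ J ⪯ (1+Mr/2)∇²f(x) and ∇²f(y)/(1+Mr/2) ⪯ J ⪯ (1+Mr/2)∇²f(y). -/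
open Matrix

/-- Gradient of f as a vector. -/
noncomputable def gradV {n : ℕ} (f : (Fin n → ℝ) → ℝ) (x : Fin n → ℝ) : Fin n → ℝ :=
  fun i => fderiv ℝ f x (Pi.single i 1)

/-- Hessian of f as a matrix. -/
noncomputable def hessM {n : ℕ} (f : (Fin n → ℝ) → ℝ) (x : Fin n → ℝ) :
    Matrix (Fin n) (Fin n) ℝ :=
  Matrix.of fun i j =>
    fderiv ℝ (fun y => fderiv ℝ f y (Pi.single j 1)) x (Pi.single i 1)

/-- Averaged Hessian of f along the segment from x to y. -/
noncomputable def avgHess {n : ℕ} (f : (Fin n → ℝ) → ℝ) (x y : Fin n → ℝ) :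
    Matrix (Fin n) (Fin n) ℝ :=
  Matrix.of fun i j => ∫ t in (0 : ℝ)..1, hessM f (x + t • (y - x)) i j

/-- Strong self-concordance of f with constant M. -/
def StronglySelfConcordant {n : ℕ} (f : (Fin n → ℝ) → ℝ) (M : ℝ) : Prop :=
  ∀ x y z w : Fin n → ℝ,
    ((M * Real.sqrt ((y - x) ⬝ᵥ (hessM f z).mulVec (y - x))) • hessM f w -
      (hessM f y - hessM f x)).PosSemidef

/-- Local gradient norm λ_f(x) = ‖∇f(x)‖ₓ*. -/
noncomputable def lamF {n : ℕ} (f : (Fin n → ℝ) → ℝ) (x : Fin n → ℝ) : ℝ :=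
  Real.sqrt (gradV f x ⬝ᵥ (hessM f x)⁻¹.mulVec (gradV f x))

section helpers
variable {n : ℕ} {f : (Fin n → ℝ) → ℝ}

lemma hess_entry_continuous (hf : ContDiff ℝ 2 f)
    (i j : Fin n) : Continuous fun z => hessM f z i j := by
  have h1 : ContDiff ℝ 1 (fun y => fderiv ℝ f y (Pi.single j 1)) := by
    have := hf.fderiv_right (m := 1) (by norm_num)
    exact (ContinuousLinearMap.apply ℝ ℝ (Pi.single j 1)).contDiff.comp this
  have h2 : Continuous (fderiv ℝ (fun y => fderiv ℝ f y (Pi.single j 1))) :=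
    h1.continuous_fderiv one_ne_zero
  exact h2.clm_apply continuous_const

lemma seg_cont (hf : ContDiff ℝ 2 f)
    (x v : Fin n → ℝ) (i j : Fin n) :
    Continuous fun t : ℝ => hessM f (x + t • v) i j :=
  (hess_entry_continuous hf i j).comp (by continuity)

lemma quad_cont (hf : ContDiff ℝ 2 f)
    (x v u : Fin n → ℝ) :
    Continuous fun t : ℝ => u ⬝ᵥ (hessM f (x + t • v)) *ᵥ u := by
  simp only [dotProduct, mulVec]
  exact continuous_finset_sum _ fun i _ => continuous_const.mul
    (continuous_finset_sum _ fun j _ => (seg_cont hf x v i j).mul continuous_const)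

lemma avg_quad (hf : ContDiff ℝ 2 f) (x y u : Fin n → ℝ) :
    u ⬝ᵥ (avgHess f x y) *ᵥ u
      = ∫ t in (0:ℝ)..1, u ⬝ᵥ (hessM f (x + t • (y - x))) *ᵥ u := by
  have hint : ∀ (i : Fin n), IntervalIntegrable
      (fun t : ℝ => u i * ∑ j, hessM f (x + t • (y - x)) i j * u j)
      MeasureTheory.volume 0 1 :=
    fun i => (continuous_const.mul (continuous_finset_sum _ fun j _ =>
      (seg_cont hf x (y - x) i j).mul continuous_const)).intervalIntegrable 0 1
  have hint2 : ∀ (i j : Fin n), IntervalIntegrable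
      (fun t : ℝ => hessM f (x + t • (y - x)) i j * u j) MeasureTheory.volume 0 1 :=
    fun i j => ((seg_cont hf x (y - x) i j).mul continuous_const).intervalIntegrable 0 1
  simp only [dotProduct, mulVec, avgHess, Matrix.of_apply]
  rw [intervalIntegral.integral_finset_sum (fun i _ => hint i)]
  refine Finset.sum_congr rfl fun i _ => ?_
  rw [intervalIntegral.integral_const_mul,
    intervalIntegral.integral_finset_sum (fun j _ => hint2 i j)]
  refine congrArg _ (Finset.sum_congr rfl fun j _ => ?_)
  rw [intervalIntegral.integral_mul_const]

lemma avg_herm (hpos : ∀ x, (hessM f x).PosDef) (x y : Fin n → ℝ) :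
    (avgHess f x y).IsHermitian := by
  refine Matrix.IsHermitian.ext fun i j => ?_
  simp only [avgHess, Matrix.of_apply, star_trivial]
  refine intervalIntegral.integral_congr fun t _ => ?_
  have := (hpos (x + t • (y - x))).1.apply i j
  simpa using this

lemma pair_bound {a c A B t : ℝ} (ha : 0 ≤ a) (hA : 0 ≤ A) (hB : 0 ≤ B)
    (ht : 0 ≤ t) (ht1 : t ≤ 1)
    (h1 : c ≤ (1 + a * t) * A) (h2 : c ≤ (1 + a * (1 - t)) * B) :
    2 * c ≤ (1 + a / 2) * (A + B) := by
  have hp1 : (0:ℝ) < 1 + a * t := by nlinarith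
  have hp2 : (0:ℝ) < 1 + a * (1 - t) := by nlinarith
  have e1 : (2 + a) * c ≤ (1 + a * t) * (1 + a * (1 - t)) * (A + B) := by nlinarith
  have e2 : (1 + a * t) * (1 + a * (1 - t)) ≤ (1 + a / 2) ^ 2 := by
    nlinarith [sq_nonneg (a * (2 * t - 1))]
  have hd : (0:ℝ) < 1 + a / 2 := by linarith
  have e3 : (2 + a) * c ≤ (1 + a / 2) ^ 2 * (A + B) := by nlinarith
  nlinarith

end helpers

lemma herm_smul {n : ℕ} {c : ℝ} {A : Matrix (Fin n) (Fin n) ℝ} (hA : A.IsHermitian) :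
    (c • A).IsHermitian := by
  show (c • A)ᴴ = c • A
  rw [Matrix.conjTranspose_smul, hA.eq]
  simp

lemma int_affine (c d : ℝ) : (∫ t in (0:ℝ)..1, (c + d * t)) = c + d / 2 := by
  have h1 : IntervalIntegrable (fun t : ℝ => d * t) MeasureTheory.volume 0 1 := by
    apply Continuous.intervalIntegrable; continuity
  rw [intervalIntegral.integral_add intervalIntegrable_const h1,
    intervalIntegral.integral_const, intervalIntegral.integral_const_mul, integral_id]
  norm_num
  ring

theorem hessians_strongly_self_concordant {n : ℕ} (f : (Fin n → ℝ) → ℝ)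
    (hf : ContDiff ℝ 2 f) (hpos : ∀ x, (hessM f x).PosDef)
    (M : ℝ) (hM : 0 ≤ M) (hssc : StronglySelfConcordant f M)
    (x y : Fin n → ℝ) :
    let r := Real.sqrt ((y - x) ⬝ᵥ (hessM f x).mulVec (y - x))
    let J := avgHess f x y
    ((1 + M * r) • hessM f x - hessM f y).PosSemidef ∧
      (hessM f y - (1 + M * r)⁻¹ • hessM f x).PosSemidef ∧
      ((1 + M * r / 2) • hessM f x - J).PosSemidef ∧
      (J - (1 + M * r / 2)⁻¹ • hessM f x).PosSemidef ∧
      ((1 + M * r / 2) • hessM f y - J).PosSemidef ∧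
      (J - (1 + M * r / 2)⁻¹ • hessM f y).PosSemidef := by
  intro r J
  have hr : r = Real.sqrt ((y - x) ⬝ᵥ (hessM f x) *ᵥ (y - x)) := rfl
  have hJ : J = avgHess f x y := rfl
  have hr0 : 0 ≤ r := Real.sqrt_nonneg _
  have hMr : 0 ≤ M * r := mul_nonneg hM hr0
  have hq : ∀ w u : Fin n → ℝ, 0 ≤ u ⬝ᵥ hessM f w *ᵥ u := by
    intro w u
    simpa using (hpos w).posSemidef.dotProduct_mulVec_nonneg u
  have key : ∀ p q w u : Fin n → ℝ,
      u ⬝ᵥ hessM f q *ᵥ u ≤ u ⬝ᵥ hessM f p *ᵥ u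
        + M * Real.sqrt ((q - p) ⬝ᵥ hessM f x *ᵥ (q - p)) * (u ⬝ᵥ hessM f w *ᵥ u) := by
    intro p q w u
    have h := (hssc p q x w).dotProduct_mulVec_nonneg u
    simp only [Matrix.sub_mulVec, Matrix.smul_mulVec, dotProduct_sub,
      dotProduct_smul, smul_eq_mul, star_trivial] at h
    linarith
  have hnorm : ∀ t : ℝ, 0 ≤ t →
      Real.sqrt ((t • (y - x)) ⬝ᵥ hessM f x *ᵥ (t • (y - x))) = t * r := by
    intro t ht
    have h1 : (t • (y - x)) ⬝ᵥ hessM f x *ᵥ (t • (y - x))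
        = t ^ 2 * ((y - x) ⬝ᵥ hessM f x *ᵥ (y - x)) := by
      rw [smul_dotProduct, Matrix.mulVec_smul, dotProduct_smul]
      simp [smul_eq_mul]; ring
    rw [h1, Real.sqrt_mul (sq_nonneg t), Real.sqrt_sq_eq_abs, abs_of_nonneg ht, hr]
  -- pointwise bounds for g t := u ⬝ᵥ H(x + t•(y-x)) u
  have hseg0 : ∀ t : ℝ, x + t • (y - x) - x = t • (y - x) := fun t => by abel
  have hsegy : ∀ t : ℝ, y - (x + t • (y - x)) = (1 - t) • (y - x) := fun t => by module
  have hsegy' : ∀ t : ℝ, x + t • (y - x) - y = -((1 - t) • (y - x)) := fun t => by module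
  have hneg : ∀ w : Fin n → ℝ, (-w) ⬝ᵥ hessM f x *ᵥ (-w) = w ⬝ᵥ hessM f x *ᵥ w := by
    intro w; simp [neg_dotProduct, Matrix.mulVec_neg, dotProduct_neg]
  have b1 : ∀ (u : Fin n → ℝ) (t : ℝ), 0 ≤ t →
      u ⬝ᵥ hessM f (x + t • (y - x)) *ᵥ u
        ≤ (1 + M * r * t) * (u ⬝ᵥ hessM f x *ᵥ u) := by
    intro u t ht
    have h := key x (x + t • (y - x)) x u
    rw [hseg0 t, hnorm t ht] at h
    nlinarith [hq x u]
  have b2 : ∀ (u : Fin n → ℝ) (t : ℝ), 0 ≤ t →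
      u ⬝ᵥ hessM f x *ᵥ u
        ≤ (1 + M * r * t) * (u ⬝ᵥ hessM f (x + t • (y - x)) *ᵥ u) := by
    intro u t ht
    have h := key (x + t • (y - x)) x (x + t • (y - x)) u
    have e : x - (x + t • (y - x)) = -(t • (y - x)) := by module
    rw [e, hneg, hnorm t ht] at h
    nlinarith [hq (x + t • (y - x)) u]
  have b3 : ∀ (u : Fin n → ℝ) (t : ℝ), t ≤ 1 →
      u ⬝ᵥ hessM f (x + t • (y - x)) *ᵥ u
        ≤ (1 + M * r * (1 - t)) * (u ⬝ᵥ hessM f y *ᵥ u) := by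
    intro u t ht
    have h := key y (x + t • (y - x)) y u
    rw [hsegy' t, hneg, hnorm (1 - t) (by linarith)] at h
    nlinarith [hq y u]
  have b4 : ∀ (u : Fin n → ℝ) (t : ℝ), t ≤ 1 →
      u ⬝ᵥ hessM f y *ᵥ u
        ≤ (1 + M * r * (1 - t)) * (u ⬝ᵥ hessM f (x + t • (y - x)) *ᵥ u) := by
    intro u t ht
    have h := key (x + t • (y - x)) y (x + t • (y - x)) u
    rw [hsegy t, hnorm (1 - t) (by linarith)] at h
    nlinarith [hq (x + t • (y - x)) u]
  have hx1 : x + (1 : ℝ) • (y - x) = y := by module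
  have hHx := (hpos x).1
  have hHy := (hpos y).1
  have hJh : J.IsHermitian := avg_herm hpos x y
  -- integrability
  have hgInt : ∀ u : Fin n → ℝ, IntervalIntegrable
      (fun t : ℝ => u ⬝ᵥ hessM f (x + t • (y - x)) *ᵥ u) MeasureTheory.volume 0 1 :=
    fun u => (quad_cont hf x (y - x) u).intervalIntegrable 0 1
  have hgIntR : ∀ u : Fin n → ℝ, IntervalIntegrable
      (fun t : ℝ => u ⬝ᵥ hessM f (x + (1 - t) • (y - x)) *ᵥ u) MeasureTheory.volume 0 1 :=
    fun u => ((quad_cont hf x (y - x) u).comp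
      (continuous_const.sub continuous_id)).intervalIntegrable 0 1
  have hrefl : ∀ u : Fin n → ℝ,
      (∫ t in (0:ℝ)..1, u ⬝ᵥ hessM f (x + (1 - t) • (y - x)) *ᵥ u)
        = ∫ t in (0:ℝ)..1, u ⬝ᵥ hessM f (x + t • (y - x)) *ᵥ u := by
    intro u
    have := intervalIntegral.integral_comp_sub_left
      (fun t : ℝ => u ⬝ᵥ hessM f (x + t • (y - x)) *ᵥ u) 1 (a := 0) (b := 1)
    simpa using this
  have hdpos : (0:ℝ) < 1 + M * r := by linarith
  have hdpos2 : (0:ℝ) < 1 + M * r / 2 := by linarith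
  refine ⟨.of_dotProduct_mulVec_nonneg ((herm_smul hHx).sub hHy) fun u => ?_,
    .of_dotProduct_mulVec_nonneg (hHy.sub (herm_smul hHx)) fun u => ?_,
    .of_dotProduct_mulVec_nonneg ((herm_smul hHx).sub hJh) fun u => ?_,
    .of_dotProduct_mulVec_nonneg (hJh.sub (herm_smul hHx)) fun u => ?_,
    .of_dotProduct_mulVec_nonneg ((herm_smul hHy).sub hJh) fun u => ?_,
    .of_dotProduct_mulVec_nonneg (hJh.sub (herm_smul hHy)) fun u => ?_⟩ <;>
    simp only [Matrix.sub_mulVec, Matrix.smul_mulVec, dotProduct_sub,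
      dotProduct_smul, smul_eq_mul, star_trivial]
  · -- (1+Mr) Hx - Hy
    have h := b1 u 1 zero_le_one
    rw [hx1] at h
    linarith
  · -- Hy - (1+Mr)⁻¹ Hx
    have h := b2 u 1 zero_le_one
    rw [hx1] at h
    have h' : u ⬝ᵥ hessM f x *ᵥ u ≤ (1 + M * r) * (u ⬝ᵥ hessM f y *ᵥ u) := by nlinarith
    have h2 := mul_le_mul_of_nonneg_left h' (inv_nonneg.2 hdpos.le)
    rw [inv_mul_cancel_left₀ hdpos.ne'] at h2
    linarith
  · -- (1+Mr/2) Hx - J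
    rw [hJ, avg_quad hf x y u]
    have mono := intervalIntegral.integral_mono_on (μ := MeasureTheory.volume)
      (by norm_num : (0:ℝ) ≤ 1) (hgInt u)
      ((continuous_const.add (continuous_const.mul continuous_id)).intervalIntegrable 0 1)
      (f := fun t : ℝ => u ⬝ᵥ hessM f (x + t • (y - x)) *ᵥ u)
      (g := fun t : ℝ => u ⬝ᵥ hessM f x *ᵥ u + (M * r * (u ⬝ᵥ hessM f x *ᵥ u)) * t)
      (fun t ht => by nlinarith [b1 u t ht.1])
    rw [int_affine] at mono
    linarith
  · -- J - (1+Mr/2)⁻¹ Hx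
    rw [hJ, avg_quad hf x y u]
    set I := ∫ t in (0:ℝ)..1, u ⬝ᵥ hessM f (x + t • (y - x)) *ᵥ u with hI
    have mono := intervalIntegral.integral_mono_on (μ := MeasureTheory.volume)
      (by norm_num : (0:ℝ) ≤ 1)
      (intervalIntegrable_const)
      ((hgInt u).add (hgIntR u))
      (f := fun _ : ℝ => 2 * (u ⬝ᵥ hessM f x *ᵥ u) / (1 + M * r / 2))
      (g := fun t : ℝ => u ⬝ᵥ hessM f (x + t • (y - x)) *ᵥ u
        + u ⬝ᵥ hessM f (x + (1 - t) • (y - x)) *ᵥ u)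
      (fun t ht => by
        have pb := pair_bound (a := M * r) (c := u ⬝ᵥ hessM f x *ᵥ u)
          (A := u ⬝ᵥ hessM f (x + t • (y - x)) *ᵥ u)
          (B := u ⬝ᵥ hessM f (x + (1 - t) • (y - x)) *ᵥ u) (t := t)
          hMr (hq _ u) (hq _ u) ht.1 ht.2
          (by nlinarith [b2 u t ht.1]) (by nlinarith [b2 u (1 - t) (by linarith [ht.2])])
        rw [div_le_iff₀ hdpos2]
        nlinarith)
    rw [intervalIntegral.integral_add (hgInt u) (hgIntR u), hrefl u, ← hI,
      intervalIntegral.integral_const] at mono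
    simp only [sub_zero, one_smul, smul_eq_mul, one_mul] at mono
    rw [div_le_iff₀ hdpos2] at mono
    have h3 : u ⬝ᵥ hessM f x *ᵥ u ≤ (1 + M * r / 2) * I := by nlinarith
    have h4 := mul_le_mul_of_nonneg_left h3 (inv_nonneg.2 hdpos2.le)
    rw [inv_mul_cancel_left₀ hdpos2.ne'] at h4
    linarith
  · -- (1+Mr/2) Hy - J
    rw [hJ, avg_quad hf x y u]
    have mono := intervalIntegral.integral_mono_on (μ := MeasureTheory.volume)
      (by norm_num : (0:ℝ) ≤ 1) (hgInt u)
      ((continuous_const.add (continuous_const.mul continuous_id)).intervalIntegrable 0 1)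
      (f := fun t : ℝ => u ⬝ᵥ hessM f (x + t • (y - x)) *ᵥ u)
      (g := fun t : ℝ => (u ⬝ᵥ hessM f y *ᵥ u + M * r * (u ⬝ᵥ hessM f y *ᵥ u))
        + (-(M * r * (u ⬝ᵥ hessM f y *ᵥ u))) * t)
      (fun t ht => by nlinarith [b3 u t ht.2])
    rw [int_affine] at mono
    linarith
  · -- J - (1+Mr/2)⁻¹ Hy
    rw [hJ, avg_quad hf x y u]
    set I := ∫ t in (0:ℝ)..1, u ⬝ᵥ hessM f (x + t • (y - x)) *ᵥ u with hI
    have mono := intervalIntegral.integral_mono_on (μ := MeasureTheory.volume)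
      (by norm_num : (0:ℝ) ≤ 1)
      (intervalIntegrable_const)
      ((hgInt u).add (hgIntR u))
      (f := fun _ : ℝ => 2 * (u ⬝ᵥ hessM f y *ᵥ u) / (1 + M * r / 2))
      (g := fun t : ℝ => u ⬝ᵥ hessM f (x + t • (y - x)) *ᵥ u
        + u ⬝ᵥ hessM f (x + (1 - t) • (y - x)) *ᵥ u)
      (fun t ht => by
        have pb := pair_bound (a := M * r) (c := u ⬝ᵥ hessM f y *ᵥ u)
          (A := u ⬝ᵥ hessM f (x + t • (y - x)) *ᵥ u)
          (B := u ⬝ᵥ hessM f (x + (1 - t) • (y - x)) *ᵥ u) (t := 1 - t)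
          hMr (hq _ u) (hq _ u) (by linarith [ht.2]) (by linarith [ht.1])
          (by nlinarith [b4 u t ht.2]) (by nlinarith [b4 u (1 - t) (by linarith [ht.1])])
        rw [div_le_iff₀ hdpos2]
        nlinarith)
    rw [intervalIntegral.integral_add (hgInt u) (hgIntR u), hrefl u, ← hI,
      intervalIntegral.integral_const] at mono
    simp only [sub_zero, one_smul, smul_eq_mul, one_mul] at mono
    rw [div_le_iff₀ hdpos2] at mono
    have h3 : u ⬝ᵥ hessM f y *ᵥ u ≤ (1 + M * r / 2) * I := by nlinarith
    have h4 := mul_le_mul_of_nonneg_left h3 (inv_nonneg.2 hdpos2.le)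
    rw [inv_mul_cancel_left₀ hdpos2.ne'] at h4
    linarith
end

section
/- Let f be twice differentiable with positive definite Hessian, strongly self-concordant with constant M. Consider one quasi-Newton step x⁺ = x - G⁻¹∇f(x) where G is symmetric positive definite; set u = x⁺ - x, r = ‖u‖_x, J = ∫₀¹∇²f(x+tu)dt. Then λ_f(x⁺) ≤ (1 + Mr/2)·θ(J,G,u)·λ_f(x), where λ_f(z) = (∇f(z)ᵀ∇²f(z)⁻¹∇f(z))^{1/2} and θ(J,G,u) = [uᵀ(G-J)J⁻¹(G-J)u/(uᵀGJ⁻¹Gu)]^{1/2}. -/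
open Matrix

noncomputable def DFPupd {n : ℕ} (A G : Matrix (Fin n) (Fin n) ℝ) (u : Fin n → ℝ) :
    Matrix (Fin n) (Fin n) ℝ :=
  G - ((u ⬝ᵥ A.mulVec u)⁻¹) •
      (vecMulVec (A.mulVec u) (G.mulVec u) + vecMulVec (G.mulVec u) (A.mulVec u))
    + (((u ⬝ᵥ G.mulVec u) / (u ⬝ᵥ A.mulVec u) + 1) * (u ⬝ᵥ A.mulVec u)⁻¹) •
      vecMulVec (A.mulVec u) (A.mulVec u)

noncomputable def BFGSupd {n : ℕ} (A G : Matrix (Fin n) (Fin n) ℝ) (u : Fin n → ℝ) :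
    Matrix (Fin n) (Fin n) ℝ :=
  G - ((u ⬝ᵥ G.mulVec u)⁻¹) • vecMulVec (G.mulVec u) (G.mulVec u)
    + ((u ⬝ᵥ A.mulVec u)⁻¹) • vecMulVec (A.mulVec u) (A.mulVec u)

noncomputable def Broyd {n : ℕ} (φ : ℝ) (A G : Matrix (Fin n) (Fin n) ℝ) (u : Fin n → ℝ) :
    Matrix (Fin n) (Fin n) ℝ :=
  if u = 0 then G else φ • DFPupd A G u + (1 - φ) • BFGSupd A G u

/-- Closeness measure θ(A, G, u). -/
noncomputable def theta {n : ℕ} (A G : Matrix (Fin n) (Fin n) ℝ) (u : Fin n → ℝ) : ℝ :=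
  if u = 0 then 0 else
    Real.sqrt ((u ⬝ᵥ ((G - A) * A⁻¹ * (G - A)).mulVec u) /
      (u ⬝ᵥ (G * A⁻¹ * G).mulVec u))

/-- Trace potential σ(A, G). -/
noncomputable def sigmaPot {n : ℕ} (A G : Matrix (Fin n) (Fin n) ℝ) : ℝ :=
  (A⁻¹ * (G - A)).trace

/-- Byrd–Nocedal potential ψ(A, G). -/
noncomputable def psiPot {n : ℕ} (A G : Matrix (Fin n) (Fin n) ℝ) : ℝ :=
  (A⁻¹ * (G - A)).trace - Real.log (A⁻¹ * G).det

noncomputable def omegaFn (t : ℝ) : ℝ := t - Real.log (1 + t)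

section Aux

variable {n : ℕ} {f : (Fin n → ℝ) → ℝ}

lemma transpose_eq_of_posDef {A : Matrix (Fin n) (Fin n) ℝ} (hA : A.PosDef) : Aᵀ = A := by
  ext i j
  have := congrFun (congrFun hA.1 i) j
  simpa using this

lemma mulVec_inv_cancel {A : Matrix (Fin n) (Fin n) ℝ} (hA : A.PosDef) (x : Fin n → ℝ) :
    A.mulVec (A⁻¹.mulVec x) = x := by
  rw [Matrix.mulVec_mulVec, Matrix.mul_nonsing_inv A (isUnit_iff_ne_zero.mpr hA.det_pos.ne'),
    Matrix.one_mulVec]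

lemma quad_nonneg {A : Matrix (Fin n) (Fin n) ℝ} (hA : A.PosSemidef) (v : Fin n → ℝ) :
    0 ≤ v ⬝ᵥ A.mulVec v := by
  have := hA.dotProduct_mulVec_nonneg v
  simpa using this

lemma sym_dot {A : Matrix (Fin n) (Fin n) ℝ} (hAt : Aᵀ = A) (v w : Fin n → ℝ) :
    v ⬝ᵥ A.mulVec w = (A.mulVec v) ⬝ᵥ w := by
  rw [Matrix.dotProduct_mulVec, ← Matrix.mulVec_transpose, hAt]

/-- Key inverse-monotonicity of positive definite quadratic forms. -/
lemma inv_quad_le {A B : Matrix (Fin n) (Fin n) ℝ} (hA : A.PosDef) (hB : B.PosDef)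
    {c : ℝ} (hc : 0 < c) (h : ∀ v, v ⬝ᵥ A.mulVec v ≤ c * (v ⬝ᵥ B.mulVec v))
    (x : Fin n → ℝ) :
    x ⬝ᵥ B⁻¹.mulVec x ≤ c * (x ⬝ᵥ A⁻¹.mulVec x) := by
  set y := B⁻¹.mulVec x with hy
  set p := A⁻¹.mulVec x with hp
  have hBy : B.mulVec y = x := mulVec_inv_cancel hB x
  have hAp : A.mulVec p = x := mulVec_inv_cancel hA x
  have hAt : Aᵀ = A := transpose_eq_of_posDef hA
  have h1 : x ⬝ᵥ B⁻¹.mulVec x = x ⬝ᵥ y := rfl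
  have h2 : y ⬝ᵥ B.mulVec y = x ⬝ᵥ y := by
    rw [hBy, dotProduct_comm]
  have h3 : y ⬝ᵥ A.mulVec y ≤ c * (y ⬝ᵥ B.mulVec y) := h y
  have hz : (0:ℝ) ≤ (c • p - y) ⬝ᵥ A.mulVec (c • p - y) :=
    quad_nonneg hA.posSemidef _
  have e1 : p ⬝ᵥ A.mulVec p = x ⬝ᵥ p := by rw [sym_dot hAt, hAp]
  have e2 : p ⬝ᵥ A.mulVec y = x ⬝ᵥ y := by rw [sym_dot hAt, hAp]
  have e3 : y ⬝ᵥ A.mulVec p = x ⬝ᵥ y := by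
    rw [hAp, dotProduct_comm]
  have expand : (c • p - y) ⬝ᵥ A.mulVec (c • p - y)
      = c^2 * (x ⬝ᵥ p) - 2*c*(x ⬝ᵥ y) + y ⬝ᵥ A.mulVec y := by
    simp only [Matrix.mulVec_sub, Matrix.mulVec_smul, dotProduct_sub, sub_dotProduct,
      dotProduct_smul, smul_dotProduct, smul_eq_mul]
    rw [e1, e2, e3]; ring
  rw [h1, show x ⬝ᵥ A⁻¹.mulVec x = x ⬝ᵥ p from rfl]
  rw [expand] at hz
  nlinarith [h2, h3]

lemma scalar_convexity {s t : ℝ} (hs : 0 ≤ s) (ht0 : 0 ≤ t) (ht1 : t ≤ 1) :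
    4/(2+s) ≤ 1/(1+t*s) + 1/(1+(1-t)*s) := by
  have h1 : 0 < 1 + t*s := by nlinarith
  have h2 : 0 < 1 + (1-t)*s := by nlinarith
  have h3 : 0 < 2 + s := by nlinarith
  rw [div_add_div _ _ h1.ne' h2.ne', div_le_div_iff₀ h3 (by positivity)]
  nlinarith [sq_nonneg (t*s - (1-t)*s)]

section Calculus
variable (hf : ContDiff ℝ 2 f)
include hf

lemma fderiv_fderiv_apply (z : Fin n → ℝ) (v w : Fin n → ℝ) :
    fderiv ℝ (fun y => fderiv ℝ f y w) z v = fderiv ℝ (fderiv ℝ f) z v w := by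
  rw [fderiv_clm_apply]
  · simp
  · exact ((hf.fderiv_right (m := 1) (le_refl 2)).differentiable one_ne_zero).differentiableAt
  · exact differentiableAt_const _

lemma hessM_eq (z : Fin n → ℝ) (i j : Fin n) :
    hessM f z i j = fderiv ℝ (fderiv ℝ f) z (Pi.single i 1) (Pi.single j 1) := by
  simp [hessM, fderiv_fderiv_apply hf]

lemma hessM_symm (z : Fin n → ℝ) (i j : Fin n) :
    hessM f z i j = hessM f z j i := by
  rw [hessM_eq hf, hessM_eq hf]
  exact (hf.contDiffAt.isSymmSndFDerivAt (by simp)) _ _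

lemma snd_symm (z : Fin n → ℝ) (v w : Fin n → ℝ) :
    fderiv ℝ (fderiv ℝ f) z v w = fderiv ℝ (fderiv ℝ f) z w v :=
  (hf.contDiffAt.isSymmSndFDerivAt (by simp)) v w

lemma f''_cont (v w : Fin n → ℝ) :
    Continuous fun z => fderiv ℝ (fderiv ℝ f) z v w := by
  have h1 : Continuous (fderiv ℝ (fderiv ℝ f)) :=
    ((hf.fderiv_right (m := 1) (le_refl 2)).fderiv_right (m := 0) (by norm_num)).continuous
  continuity

lemma hessM_continuous (i j : Fin n) :
    Continuous fun z => hessM f z i j := by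
  have : Continuous fun z => fderiv ℝ (fderiv ℝ f) z (Pi.single i 1) (Pi.single j 1) :=
    f''_cont hf _ _
  simpa only [← hessM_eq hf] using this

lemma cont_quad (x u v w : Fin n → ℝ) :
    Continuous fun t : ℝ => v ⬝ᵥ (hessM f (x + t • u)).mulVec w := by
  have hcl : ∀ i j : Fin n, Continuous fun t : ℝ => hessM f (x + t • u) i j :=
    fun i j => (hessM_continuous hf i j).comp
      (continuous_const.add (continuous_id.smul continuous_const))
  have expand : ∀ (A : Matrix (Fin n) (Fin n) ℝ),
      v ⬝ᵥ A.mulVec w = ∑ i, ∑ j, v i * A i j * w j := by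
    intro A
    simp [Matrix.mulVec, dotProduct, Finset.mul_sum, mul_assoc]
  simp_rw [expand]
  exact continuous_finset_sum _ fun i _ => continuous_finset_sum _ fun j _ =>
    (continuous_const.mul (hcl i j)).mul continuous_const

lemma hasDerivAt_grad (x u : Fin n → ℝ) (v : Fin n → ℝ) (t : ℝ) :
    HasDerivAt (fun s : ℝ => fderiv ℝ f (x + s • u) v)
      (fderiv ℝ (fderiv ℝ f) (x + t • u) u v) t := by
  have hline : HasDerivAt (fun s : ℝ => x + s • u) u t := by
    simpa using ((hasDerivAt_id t).smul_const u).const_add x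
  have hdf : HasFDerivAt (fderiv ℝ f) (fderiv ℝ (fderiv ℝ f) (x + t • u)) (x + t • u) :=
    (((hf.fderiv_right (m := 1) (le_refl 2)).differentiable one_ne_zero) _).hasFDerivAt
  have hcomp : HasDerivAt (fun s : ℝ => fderiv ℝ f (x + s • u))
      (fderiv ℝ (fderiv ℝ f) (x + t • u) u) t := hdf.comp_hasDerivAt t hline
  simpa using hcomp.clm_apply (hasDerivAt_const t v)

lemma taylor_grad (x u : Fin n → ℝ) :
    gradV f (x + u) = gradV f x + (avgHess f x (x + u)).mulVec u := by
  funext i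
  have key : ∀ z, (fderiv ℝ (fderiv ℝ f) z (Pi.single i 1)) u
      = ∑ j, hessM f z i j * u j := by
    intro z
    have hu : u = ∑ j, u j • (Pi.single j 1 : Fin n → ℝ) := by
      conv_lhs => rw [← Finset.univ_sum_single u]
      refine Finset.sum_congr rfl fun j _ => ?_
      ext k
      by_cases h : k = j <;> simp [Pi.single_apply, h]
    conv_lhs => rw [hu]
    rw [map_sum]
    refine Finset.sum_congr rfl fun j _ => ?_
    rw [(fderiv ℝ (fderiv ℝ f) z (Pi.single i 1)).map_smul, hessM_eq hf, smul_eq_mul, mul_comm]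
  have hcont : ∀ (v w : Fin n → ℝ), Continuous fun t : ℝ =>
      fderiv ℝ (fderiv ℝ f) (x + t • u) v w := by
    intro v w
    exact (f''_cont hf v w).comp (by continuity)
  have hftc : gradV f (x + u) i - gradV f x i
      = ∫ t in (0:ℝ)..1, fderiv ℝ (fderiv ℝ f) (x + t • u) u (Pi.single i 1) := by
    have := intervalIntegral.integral_eq_sub_of_hasDerivAt
      (f := fun s : ℝ => fderiv ℝ f (x + s • u) (Pi.single i 1))
      (f' := fun s : ℝ => fderiv ℝ (fderiv ℝ f) (x + s • u) u (Pi.single i 1))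
      (a := 0) (b := 1)
      (fun t _ => hasDerivAt_grad hf x u (Pi.single i 1) t)
      ((hcont u (Pi.single i 1)).intervalIntegrable 0 1)
    rw [this, gradV, gradV]
    simp
  have hmv : (avgHess f x (x + u)).mulVec u i
      = ∫ t in (0:ℝ)..1, fderiv ℝ (fderiv ℝ f) (x + t • u) u (Pi.single i 1) := by
    have h1 : (avgHess f x (x + u)).mulVec u i
        = ∑ j, (∫ t in (0:ℝ)..1, hessM f (x + t • u) i j) * u j := by
      simp [avgHess, Matrix.mulVec, dotProduct]
    rw [h1]
    have h2 : ∀ j, (∫ t in (0:ℝ)..1, hessM f (x + t • u) i j) * u j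
        = ∫ t in (0:ℝ)..1, hessM f (x + t • u) i j * u j := by
      intro j
      rw [← intervalIntegral.integral_mul_const]
    simp_rw [h2]
    rw [← intervalIntegral.integral_finset_sum]
    · congr 1
      funext t
      rw [← key, snd_symm hf]
    · intro j _
      have : Continuous fun t : ℝ => hessM f (x + t • u) i j * u j := by
        have := (hessM_continuous hf i j).comp
          (show Continuous fun t : ℝ => x + t • u from
            continuous_const.add (continuous_id.smul continuous_const))
        exact this.mul continuous_const
      exact this.intervalIntegrable 0 1
  rw [Pi.add_apply, hmv, ← hftc]; ring

lemma quad_avgHess (x y v w : Fin n → ℝ) :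
    v ⬝ᵥ (avgHess f x y).mulVec w
      = ∫ t in (0:ℝ)..1, v ⬝ᵥ (hessM f (x + t • (y - x))).mulVec w := by
  have hcl : ∀ i j : Fin n, Continuous fun t : ℝ => hessM f (x + t • (y - x)) i j :=
    fun i j => (hessM_continuous hf i j).comp
      (continuous_const.add (continuous_id.smul continuous_const))
  have expand : ∀ (A : Matrix (Fin n) (Fin n) ℝ),
      v ⬝ᵥ A.mulVec w = ∑ i, ∑ j, v i * A i j * w j := by
    intro A
    simp [Matrix.mulVec, dotProduct, Finset.mul_sum, mul_assoc]
  rw [expand]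
  have h1 : ∀ i j : Fin n,
      v i * (avgHess f x y) i j * w j
        = ∫ t in (0:ℝ)..1, v i * hessM f (x + t • (y - x)) i j * w j := by
    intro i j
    rw [show (avgHess f x y) i j = ∫ t in (0:ℝ)..1, hessM f (x + t • (y - x)) i j from rfl,
      ← intervalIntegral.integral_const_mul, ← intervalIntegral.integral_mul_const]
  simp_rw [h1]
  have h2 : ∀ i : Fin n,
      (∑ j, ∫ t in (0:ℝ)..1, v i * hessM f (x + t • (y - x)) i j * w j)
        = ∫ t in (0:ℝ)..1, ∑ j, v i * hessM f (x + t • (y - x)) i j * w j := by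
    intro i
    rw [← intervalIntegral.integral_finset_sum]
    intro j _
    apply Continuous.intervalIntegrable
    exact ((continuous_const.mul (hcl i j)).mul continuous_const)
  simp_rw [h2]
  rw [← intervalIntegral.integral_finset_sum]
  · congr 1; funext t; rw [expand]
  · intro i _
    apply Continuous.intervalIntegrable
    exact continuous_finset_sum _ fun j _ => ((continuous_const.mul (hcl i j)).mul continuous_const)

end Calculus

lemma ssc_quad {M : ℝ} (hssc : StronglySelfConcordant f M) (x y z w v : Fin n → ℝ) :
    v ⬝ᵥ (hessM f y).mulVec v - v ⬝ᵥ (hessM f x).mulVec v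
      ≤ (M * Real.sqrt ((y - x) ⬝ᵥ (hessM f z).mulVec (y - x)))
        * (v ⬝ᵥ (hessM f w).mulVec v) := by
  have h := (hssc x y z w).dotProduct_mulVec_nonneg v
  have hsv : star v = v := rfl
  rw [hsv] at h
  rw [Matrix.sub_mulVec, Matrix.sub_mulVec, Matrix.smul_mulVec,
    dotProduct_sub, dotProduct_sub, dotProduct_smul, smul_eq_mul] at h
  linarith

end Aux
set_option maxHeartbeats 1000000 in
theorem one_step_progress_general {n : ℕ} (f : (Fin n → ℝ) → ℝ)
    (hf : ContDiff ℝ 2 f) (hpos : ∀ x, (hessM f x).PosDef)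
    (M : ℝ) (hM : 0 ≤ M) (hssc : StronglySelfConcordant f M)
    (x : Fin n → ℝ) (G : Matrix (Fin n) (Fin n) ℝ) (hG : G.PosDef) :
    let u := -(G⁻¹.mulVec (gradV f x))
    let xp := x + u
    let r := Real.sqrt (u ⬝ᵥ (hessM f x).mulVec u)
    let J := avgHess f x xp
    lamF f xp ≤ (1 + M * r / 2) * theta J G u * lamF f x := by
  intro u xp r J
  by_cases hu : u = 0
  · -- degenerate case: gradient is zero
    have hinv0 : G⁻¹.mulVec (gradV f x) = 0 := by
      have h0 : -(G⁻¹.mulVec (gradV f x)) = 0 := hu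
      exact neg_eq_zero.mp h0
    have hg0 : gradV f x = 0 := by
      have h := mulVec_inv_cancel hG (gradV f x)
      rw [hinv0, Matrix.mulVec_zero] at h
      exact h.symm
    have hxp : xp = x := by
      show x + u = x
      rw [hu, add_zero]
    have hlx : lamF f x = 0 := by
      simp [lamF, hg0]
    rw [hxp, hlx, mul_zero]
  · -- main case
    have hr_def : r = Real.sqrt (u ⬝ᵥ (hessM f x).mulVec u) := rfl
    have hxp : xp = x + u := rfl
    set s := M * r with hs_def
    have hr0 : 0 ≤ r := Real.sqrt_nonneg _
    have hs0 : 0 ≤ s := mul_nonneg hM hr0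
    have hc : (0:ℝ) < 1 + s/2 := by linarith
    have hg0 : gradV f x ≠ 0 := by
      intro h
      apply hu
      show -(G⁻¹.mulVec (gradV f x)) = 0
      rw [h, Matrix.mulVec_zero, neg_zero]
    have hGu : G.mulVec u = -(gradV f x) := by
      show G.mulVec (-(G⁻¹.mulVec (gradV f x))) = -(gradV f x)
      rw [Matrix.mulVec_neg, mulVec_inv_cancel hG]
    -- quadratic form of J as an integral
    have hquadJ : ∀ v w : Fin n → ℝ, v ⬝ᵥ J.mulVec w
        = ∫ t in (0:ℝ)..1, v ⬝ᵥ (hessM f (x + t • u)).mulVec w := by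
      intro v w
      have := quad_avgHess hf x xp v w
      simpa [hxp, add_sub_cancel_left] using this
    -- pointwise upper bound against the Hessian at xp
    have bound1 : ∀ t : ℝ, 0 ≤ t → t ≤ 1 → ∀ v : Fin n → ℝ,
        v ⬝ᵥ (hessM f (x + t • u)).mulVec v
          ≤ (1 + (1-t)*s) * (v ⬝ᵥ (hessM f xp).mulVec v) := by
      intro t ht0 ht1 v
      have key := ssc_quad hssc xp (x + t • u) x xp v
      have hdiff : (x + t • u) - xp = (t-1) • u := by
        rw [hxp]; ext k
        simp [sub_smul]
        ring
      rw [hdiff] at key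
      have hdot : ((t-1) • u) ⬝ᵥ (hessM f x).mulVec ((t-1) • u)
          = (t-1)^2 * (u ⬝ᵥ (hessM f x).mulVec u) := by
        rw [Matrix.mulVec_smul, smul_dotProduct, dotProduct_smul, smul_eq_mul, smul_eq_mul]
        ring
      rw [hdot] at key
      have hsqrt : Real.sqrt ((t-1)^2 * (u ⬝ᵥ (hessM f x).mulVec u)) = (1-t) * r := by
        rw [Real.sqrt_mul (sq_nonneg _), Real.sqrt_sq_eq_abs, abs_of_nonpos (by linarith), hr_def]
        ring
      rw [hsqrt] at key
      have hmr : M * ((1-t)*r) = (1-t)*s := by rw [hs_def]; ring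
      rw [hmr] at key
      nlinarith [key]
    -- pointwise lower bound against the Hessian at x
    have bound2 : ∀ t : ℝ, 0 ≤ t → ∀ v : Fin n → ℝ,
        v ⬝ᵥ (hessM f x).mulVec v
          ≤ (1 + t*s) * (v ⬝ᵥ (hessM f (x + t • u)).mulVec v) := by
      intro t ht0 v
      have key := ssc_quad hssc (x + t • u) x x (x + t • u) v
      have hdiff : x - (x + t • u) = (-t) • u := by
        ext k
        simp [neg_smul]
      rw [hdiff] at key
      have hdot : ((-t) • u) ⬝ᵥ (hessM f x).mulVec ((-t) • u)
          = t^2 * (u ⬝ᵥ (hessM f x).mulVec u) := by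
        rw [Matrix.mulVec_smul, smul_dotProduct, dotProduct_smul, smul_eq_mul, smul_eq_mul]
        ring
      rw [hdot] at key
      have hsqrt : Real.sqrt (t^2 * (u ⬝ᵥ (hessM f x).mulVec u)) = t * r := by
        rw [Real.sqrt_mul (sq_nonneg _), Real.sqrt_sq_eq_abs, abs_of_nonneg ht0, hr_def]
      rw [hsqrt] at key
      have hmr : M * (t*r) = t*s := by rw [hs_def]; ring
      rw [hmr] at key
      nlinarith [key]
    -- integrated bounds
    have intI : ∀ v : Fin n → ℝ,
        v ⬝ᵥ J.mulVec v ≤ (1 + s/2) * (v ⬝ᵥ (hessM f xp).mulVec v) := by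
      intro v
      rw [hquadJ v v]
      set C := v ⬝ᵥ (hessM f xp).mulVec v with hC
      have hmono := intervalIntegral.integral_mono_on (μ := MeasureTheory.volume)
        (f := fun t : ℝ => v ⬝ᵥ (hessM f (x + t • u)).mulVec v)
        (g := fun t : ℝ => (1 + (1-t)*s) * C)
        zero_le_one
        ((cont_quad hf x u v v).intervalIntegrable 0 1)
        (((continuous_const.add ((continuous_const.sub continuous_id).mul
          continuous_const)).mul continuous_const).intervalIntegrable 0 1)
        (fun t ht => bound1 t ht.1 ht.2 v)
      have hval : (∫ t in (0:ℝ)..1, (1 + (1-t)*s) * C) = (1 + s/2) * C := by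
        have hfun : (fun t : ℝ => (1 + (1-t)*s) * C)
            = fun t : ℝ => ((1+s)*C) - ((s*C) * t) := by
          funext t; ring
        rw [hfun, intervalIntegral.integral_sub (g := fun t : ℝ => (s*C) * t) (intervalIntegrable_const)
          (((continuous_const.mul continuous_id') :
            Continuous fun t : ℝ => (s*C) * t).intervalIntegrable 0 1),
          intervalIntegral.integral_const, intervalIntegral.integral_const_mul,
          integral_id]
        simp
        ring
      rw [hval] at hmono
      exact hmono
    have intII : ∀ v : Fin n → ℝ,
        v ⬝ᵥ (hessM f x).mulVec v ≤ (1 + s/2) * (v ⬝ᵥ J.mulVec v) := by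
      intro v
      set q0 := v ⬝ᵥ (hessM f x).mulVec v with hq0
      have q0n : 0 ≤ q0 := quad_nonneg (hpos x).posSemidef v
      have hptw : ∀ t ∈ Set.Icc (0:ℝ) 1,
          (4/(2+s)) * q0 ≤ (v ⬝ᵥ (hessM f (x + t • u)).mulVec v)
            + (v ⬝ᵥ (hessM f (x + (1-t) • u)).mulVec v) := by
        intro t ht
        have h1 := bound2 t ht.1 v
        have h2 := bound2 (1-t) (by linarith [ht.2]) v
        have hsc := scalar_convexity hs0 ht.1 ht.2
        have ha : (0:ℝ) < 1 + t*s := by nlinarith [ht.1, hs0]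
        have hb : (0:ℝ) < 1 + (1-t)*s := by nlinarith [ht.2, hs0]
        have e1 : (1/(1+t*s)) * q0 ≤ v ⬝ᵥ (hessM f (x + t • u)).mulVec v := by
          rw [one_div, inv_mul_le_iff₀ ha]
          linarith [h1]
        have e2 : (1/(1+(1-t)*s)) * q0 ≤ v ⬝ᵥ (hessM f (x + (1-t) • u)).mulVec v := by
          rw [one_div, inv_mul_le_iff₀ hb]
          linarith [h2]
        have e3 : (4/(2+s)) * q0 ≤ (1/(1+t*s) + 1/(1+(1-t)*s)) * q0 :=
          mul_le_mul_of_nonneg_right hsc q0n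
        rw [add_mul] at e3
        linarith
      have i1 : IntervalIntegrable (fun t : ℝ => v ⬝ᵥ (hessM f (x + t • u)).mulVec v)
          MeasureTheory.volume 0 1 := (cont_quad hf x u v v).intervalIntegrable 0 1
      have i2 : IntervalIntegrable (fun t : ℝ => v ⬝ᵥ (hessM f (x + (1-t) • u)).mulVec v)
          MeasureTheory.volume 0 1 :=
        ((cont_quad hf x u v v).comp
          (continuous_const.sub continuous_id : Continuous fun t : ℝ => 1 - t)).intervalIntegrable 0 1
      have hmono := intervalIntegral.integral_mono_on (μ := MeasureTheory.volume)
        (f := fun _ : ℝ => (4/(2+s)) * q0)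
        (g := fun t : ℝ => (v ⬝ᵥ (hessM f (x + t • u)).mulVec v)
            + (v ⬝ᵥ (hessM f (x + (1-t) • u)).mulVec v))
        zero_le_one intervalIntegrable_const (i1.add i2) hptw
      rw [intervalIntegral.integral_const, intervalIntegral.integral_add i1 i2] at hmono
      have hflip : (∫ t in (0:ℝ)..1, v ⬝ᵥ (hessM f (x + (1-t) • u)).mulVec v)
          = ∫ t in (0:ℝ)..1, v ⬝ᵥ (hessM f (x + t • u)).mulVec v := by
        have := intervalIntegral.integral_comp_sub_left
          (a := 0) (b := 1)
          (fun τ : ℝ => v ⬝ᵥ (hessM f (x + τ • u)).mulVec v) 1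
        simpa using this
      rw [hflip, ← hquadJ v v] at hmono
      simp only [sub_zero, one_smul, smul_eq_mul] at hmono
      have h2s : (0:ℝ) < 2 + s := by linarith
      rw [one_mul, div_mul_eq_mul_div] at hmono
      have hmono' := (div_le_iff₀ h2s).mp hmono
      nlinarith [hmono']
    -- J is positive definite
    have hJsym : ∀ i j, J i j = J j i := by
      intro i j
      show (∫ t in (0:ℝ)..1, hessM f (x + t • (xp - x)) i j)
        = ∫ t in (0:ℝ)..1, hessM f (x + t • (xp - x)) j i
      congr 1
      funext t
      exact hessM_symm hf _ i j
    have hJherm : J.IsHermitian := by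
      ext i j
      rw [Matrix.conjTranspose_apply]
      exact (star_trivial _).trans (hJsym j i)
    have hJpos : J.PosDef := by
      refine Matrix.PosDef.of_dotProduct_mulVec_pos hJherm fun v hv => ?_
      have h0 : 0 < v ⬝ᵥ (hessM f x).mulVec v := by
        have := (hpos x).dotProduct_mulVec_pos hv
        simpa using this
      have h1 := intII v
      have h2 : 0 < v ⬝ᵥ J.mulVec v := by nlinarith
      simpa using h2
    have hJt : Jᵀ = J := transpose_eq_of_posDef hJpos
    have hGt : Gᵀ = G := transpose_eq_of_posDef hG
    -- Taylor formula
    have htay : gradV f xp = gradV f x + J.mulVec u := taylor_grad hf x u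
    set w := (G - J).mulVec u with hw
    have hgp : gradV f xp = -w := by
      rw [htay, hw, Matrix.sub_mulVec, hGu, neg_sub, sub_neg_eq_add, add_comm]
    -- theta computations
    have hGJt : (G - J)ᵀ = G - J := by rw [Matrix.transpose_sub, hGt, hJt]
    have hNum : u ⬝ᵥ ((G - J) * J⁻¹ * (G - J)).mulVec u = w ⬝ᵥ J⁻¹.mulVec w := by
      rw [← Matrix.mulVec_mulVec, ← Matrix.mulVec_mulVec, sym_dot hGJt]
    have hDen : u ⬝ᵥ (G * J⁻¹ * G).mulVec u
        = gradV f x ⬝ᵥ J⁻¹.mulVec (gradV f x) := by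
      rw [← Matrix.mulVec_mulVec, ← Matrix.mulVec_mulVec, sym_dot hGt, hGu]
      rw [Matrix.mulVec_neg, neg_dotProduct, dotProduct_neg, neg_neg]
    have hJinv : J⁻¹.PosDef := hJpos.inv
    have hDenpos : 0 < gradV f x ⬝ᵥ J⁻¹.mulVec (gradV f x) := by
      have := hJinv.dotProduct_mulVec_pos hg0
      simpa using this
    have hNum0 : 0 ≤ w ⬝ᵥ J⁻¹.mulVec w := quad_nonneg hJinv.posSemidef w
    have hth : theta J G u
        = Real.sqrt ((w ⬝ᵥ J⁻¹.mulVec w) / (gradV f x ⬝ᵥ J⁻¹.mulVec (gradV f x))) := by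
      rw [theta, if_neg hu, hNum, hDen]
    have hth0 : 0 ≤ theta J G u := by rw [hth]; exact Real.sqrt_nonneg _
    have hthsq : (theta J G u)^2 * (gradV f x ⬝ᵥ J⁻¹.mulVec (gradV f x))
        = w ⬝ᵥ J⁻¹.mulVec w := by
      rw [hth, Real.sq_sqrt (div_nonneg hNum0 hDenpos.le), div_mul_cancel₀ _ hDenpos.ne']
    -- the two inverse bounds
    have hineqA : ∀ y : Fin n → ℝ, y ⬝ᵥ (hessM f xp)⁻¹.mulVec y
        ≤ (1 + s/2) * (y ⬝ᵥ J⁻¹.mulVec y) :=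
      fun y => inv_quad_le hJpos (hpos xp) hc intI y
    have hineqB : ∀ y : Fin n → ℝ, y ⬝ᵥ J⁻¹.mulVec y
        ≤ (1 + s/2) * (y ⬝ᵥ (hessM f x)⁻¹.mulVec y) :=
      fun y => inv_quad_le (hpos x) hJpos hc intII y
    -- final chain
    have hlamx : (lamF f x)^2 = gradV f x ⬝ᵥ (hessM f x)⁻¹.mulVec (gradV f x) := by
      rw [lamF, Real.sq_sqrt (quad_nonneg (hpos x).inv.posSemidef _)]
    have hlamx0 : 0 ≤ lamF f x := Real.sqrt_nonneg _
    have keyineq : gradV f xp ⬝ᵥ (hessM f xp)⁻¹.mulVec (gradV f xp)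
        ≤ ((1 + s/2) * theta J G u * lamF f x)^2 := by
      rw [hgp]
      have hneg : (-w) ⬝ᵥ (hessM f xp)⁻¹.mulVec (-w) = w ⬝ᵥ (hessM f xp)⁻¹.mulVec w := by
        rw [Matrix.mulVec_neg, neg_dotProduct, dotProduct_neg, neg_neg]
      rw [hneg]
      calc w ⬝ᵥ (hessM f xp)⁻¹.mulVec w
          ≤ (1 + s/2) * (w ⬝ᵥ J⁻¹.mulVec w) := hineqA w
        _ = (1 + s/2) * ((theta J G u)^2
              * (gradV f x ⬝ᵥ J⁻¹.mulVec (gradV f x))) := by rw [hthsq]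
        _ ≤ (1 + s/2) * ((theta J G u)^2
              * ((1 + s/2) * (gradV f x ⬝ᵥ (hessM f x)⁻¹.mulVec (gradV f x)))) := by
            refine mul_le_mul_of_nonneg_left ?_ hc.le
            exact mul_le_mul_of_nonneg_left (hineqB _) (sq_nonneg _)
        _ = ((1 + s/2) * theta J G u * lamF f x)^2 := by rw [← hlamx]; ring
    have hRnn : 0 ≤ (1 + s/2) * theta J G u * lamF f x :=
      mul_nonneg (mul_nonneg hc.le hth0) hlamx0
    have hfinal : lamF f xp ≤ (1 + s/2) * theta J G u * lamF f x := by
      have h1 : lamF f xp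
          = Real.sqrt (gradV f xp ⬝ᵥ (hessM f xp)⁻¹.mulVec (gradV f xp)) := rfl
      rw [h1]
      calc Real.sqrt (gradV f xp ⬝ᵥ (hessM f xp)⁻¹.mulVec (gradV f xp))
          ≤ Real.sqrt (((1 + s/2) * theta J G u * lamF f x)^2) := Real.sqrt_le_sqrt keyineq
        _ = (1 + s/2) * theta J G u * lamF f x := Real.sqrt_sq hRnn
    calc lamF f xp ≤ (1 + s/2) * theta J G u * lamF f x := hfinal
      _ = (1 + s/2) * theta J G u * lamF f x := rfl
end

section
/- If G, J are symmetric positive definite with (1/ξ')J ⪯ G ⪯ ξ'(L/μ)J for ξ' ≥ 1 and 0 < μ ≤ L, then θ(J,G,u) ≤ max{1 - μ/(ξ'L), ξ' - 1} for every u, where θ(J,G,u) = [uᵀ(G-J)J⁻¹(G-J)u/(uᵀGJ⁻¹Gu)]^{1/2}. -/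
set_option maxHeartbeats 2000000


open Matrix

lemma dot_self_nonneg {n : ℕ} (v : Fin n → ℝ) : 0 ≤ v ⬝ᵥ v :=
  Finset.sum_nonneg fun i _ => mul_self_nonneg _

lemma psd_smul' {n : ℕ} {A : Matrix (Fin n) (Fin n) ℝ} (hA : A.PosSemidef) {c : ℝ}
    (hc : 0 ≤ c) : (c • A).PosSemidef := by
  have hAT : Aᵀ = A := by
    rw [← Matrix.conjTranspose_eq_transpose_of_trivial]; exact hA.1
  constructor
  · simp [Matrix.IsHermitian, Matrix.conjTranspose_smul, hAT]
  · intro x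
    exact (hA.smul hc).2 x

lemma isUnit_det_of_sq {n : ℕ} {B A : Matrix (Fin n) (Fin n) ℝ} (h : B * B = A)
    (hA : IsUnit A.det) : IsUnit B.det := by
  rw [isUnit_iff_ne_zero] at hA ⊢
  intro h0
  apply hA
  rw [← h, det_mul, h0, mul_zero]

lemma sym_quad_bound {n : ℕ} (S : Matrix (Fin n) (Fin n) ℝ) (hS : Sᵀ = S) {ρ : ℝ} (hρ : 0 ≤ ρ)
    (h : ∀ x, |x ⬝ᵥ S *ᵥ x| ≤ ρ * (x ⬝ᵥ x)) (z : Fin n → ℝ) :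
    (S *ᵥ z) ⬝ᵥ (S *ᵥ z) ≤ ρ ^ 2 * (z ⬝ᵥ z) := by
  have hsym : ∀ x y : Fin n → ℝ, x ⬝ᵥ S *ᵥ y = (S *ᵥ x) ⬝ᵥ y := by
    intro x y
    rw [Matrix.dotProduct_mulVec, ← Matrix.mulVec_transpose, hS]
  set a := z ⬝ᵥ z with ha'
  set b := (S *ᵥ z) ⬝ᵥ (S *ᵥ z) with hb'
  set d := z ⬝ᵥ S *ᵥ z with hd'
  set e := (S *ᵥ z) ⬝ᵥ S *ᵥ (S *ᵥ z) with he'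
  have ha : 0 ≤ a := dot_self_nonneg z
  have hb : 0 ≤ b := dot_self_nonneg _
  rcases eq_or_lt_of_le hρ with hρ0 | hρpos
  · -- ρ = 0, quadratic form vanishes
    have hq0 : ∀ x : Fin n → ℝ, x ⬝ᵥ S *ᵥ x = 0 := by
      intro x
      have := h x
      rw [← hρ0, zero_mul] at this
      exact abs_eq_zero.mp (le_antisymm this (abs_nonneg _))
    have hexp : (z + S *ᵥ z) ⬝ᵥ S *ᵥ (z + S *ᵥ z) = d + 2 * b + e := by
      simp only [Matrix.mulVec_add, dotProduct_add, add_dotProduct]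
      rw [hsym z (S *ᵥ z)]
      ring
    have h1 := hq0 (z + S *ᵥ z)
    have h2 := hq0 z
    have h3 := hq0 (S *ᵥ z)
    rw [hexp] at h1
    rw [← hd'] at h2
    rw [← he'] at h3
    nlinarith
  · set t := ρ⁻¹ with ht'
    have htpos : 0 < t := inv_pos.mpr hρpos
    have hqp : (z + t • (S *ᵥ z)) ⬝ᵥ S *ᵥ (z + t • (S *ᵥ z)) = d + 2 * t * b + t ^ 2 * e := by
      simp only [Matrix.mulVec_add, Matrix.mulVec_smul, dotProduct_add, add_dotProduct,
        dotProduct_smul, smul_dotProduct, smul_eq_mul]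
      rw [hsym z (S *ᵥ z)]
      ring
    have hqm : (z - t • (S *ᵥ z)) ⬝ᵥ S *ᵥ (z - t • (S *ᵥ z)) = d - 2 * t * b + t ^ 2 * e := by
      simp only [Matrix.mulVec_sub, Matrix.mulVec_smul, dotProduct_sub, sub_dotProduct,
        dotProduct_smul, smul_dotProduct, smul_eq_mul]
      rw [hsym z (S *ᵥ z)]
      ring
    have hnp : (z + t • (S *ᵥ z)) ⬝ᵥ (z + t • (S *ᵥ z)) = a + 2 * t * d + t ^ 2 * b := by
      simp only [dotProduct_add, add_dotProduct, dotProduct_smul, smul_dotProduct, smul_eq_mul]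
      rw [dotProduct_comm (S *ᵥ z) z]
      ring
    have hnm : (z - t • (S *ᵥ z)) ⬝ᵥ (z - t • (S *ᵥ z)) = a - 2 * t * d + t ^ 2 * b := by
      simp only [dotProduct_sub, sub_dotProduct, dotProduct_smul, smul_dotProduct, smul_eq_mul]
      rw [dotProduct_comm (S *ᵥ z) z]
      ring
    have h1 := (abs_le.mp (h (z + t • (S *ᵥ z)))).2
    have h2 := (abs_le.mp (h (z - t • (S *ᵥ z)))).1
    rw [hqp, hnp] at h1
    rw [hqm, hnm] at h2
    have h3b : ρ * t ^ 2 * b = t * b := by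
      rw [ht']; field_simp
    have h4 : 2 * (t * b) ≤ 2 * (ρ * a) := by nlinarith [h1, h2, h3b]
    have h5 := mul_le_mul_of_nonneg_left h4 hρ
    have h6 : ρ * (2 * (t * b)) = 2 * b := by rw [ht']; field_simp
    have h7 : ρ * (2 * (ρ * a)) = 2 * (ρ ^ 2 * a) := by ring
    linarith [h5]

open scoped MatrixOrder in
lemma psd_sqrt_exists {n : ℕ} {A : Matrix (Fin n) (Fin n) ℝ} (hA : A.PosSemidef) :
    ∃ R : Matrix (Fin n) (Fin n) ℝ, R.PosSemidef ∧ R * R = A :=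
  ⟨CFC.sqrt A, (CFC.sqrt_nonneg A).posSemidef, CFC.sqrt_mul_sqrt_self A hA.nonneg⟩

theorem theta_le_rho {n : ℕ} (J G : Matrix (Fin n) (Fin n) ℝ)
    (hJ : J.PosDef) (hG : G.PosDef) (ξ' μ L : ℝ) (hξ : 1 ≤ ξ')
    (hμ : 0 < μ) (hμL : μ ≤ L)
    (hlow : (G - ξ'⁻¹ • J).PosSemidef) (hup : ((ξ' * (L / μ)) • J - G).PosSemidef) :
    ∀ u : Fin n → ℝ, theta J G u ≤ max (1 - μ / (ξ' * L)) (ξ' - 1) := by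
  intro u
  set ρ : ℝ := max (1 - μ / (ξ' * L)) (ξ' - 1) with hρdef
  have hξ0 : (0:ℝ) < ξ' := lt_of_lt_of_le one_pos hξ
  have hL : (0:ℝ) < L := lt_of_lt_of_le hμ hμL
  have hρ1 : ξ' - 1 ≤ ρ := le_max_right _ _
  have hρ2 : 1 - μ / (ξ' * L) ≤ ρ := le_max_left _ _
  have hρ0 : 0 ≤ ρ := le_trans (by linarith) hρ1
  by_cases hu : u = 0
  · simp [theta, hu, hρ0]
  rw [theta, if_neg hu]
  -- basic unit facts
  have hJdet : IsUnit J.det := (isUnit_iff_isUnit_det J).mp hJ.isUnit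
  have hGdet : IsUnit G.det := (isUnit_iff_isUnit_det G).mp hG.isUnit
  obtain ⟨R, hRsd, hRR⟩ := psd_sqrt_exists hJ.posSemidef
  have hRT : Rᵀ = R := by rw [← Matrix.conjTranspose_eq_transpose_of_trivial]; exact hRsd.1
  have hGT : Gᵀ = G := by rw [← Matrix.conjTranspose_eq_transpose_of_trivial]; exact hG.1
  have hRdet : IsUnit R.det := isUnit_det_of_sq hRR hJdet
  have hRiT : R⁻¹ᵀ = R⁻¹ := by rw [Matrix.transpose_nonsing_inv, hRT]
  have hRRi : R * R⁻¹ = 1 := Matrix.mul_nonsing_inv R hRdet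
  have hRiR : R⁻¹ * R = 1 := Matrix.nonsing_inv_mul R hRdet
  have hJinv : J⁻¹ = R⁻¹ * R⁻¹ := by rw [← hRR, Matrix.mul_inv_rev]
  set M : Matrix (Fin n) (Fin n) ℝ := R⁻¹ * G * R⁻¹ with hMdef
  have hMT : Mᵀ = M := by
    rw [hMdef, Matrix.transpose_mul, Matrix.transpose_mul, hRiT, hGT]
    noncomm_ring
  have hMH : Mᴴ = M := by rw [Matrix.conjTranspose_eq_transpose_of_trivial]; exact hMT
  have hMpsd : M.PosSemidef := by
    have := hG.posSemidef.mul_mul_conjTranspose_same R⁻¹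
    rwa [Matrix.conjTranspose_eq_transpose_of_trivial, hRiT] at this
  have hMdet : IsUnit M.det := by
    rw [hMdef, Matrix.det_mul, Matrix.det_mul, Matrix.det_nonsing_inv]
    rw [isUnit_iff_ne_zero] at hRdet hGdet ⊢
    simp [hRdet, hGdet]
  have hMMi : M * M⁻¹ = 1 := Matrix.mul_nonsing_inv M hMdet
  have hMiM : M⁻¹ * M = 1 := Matrix.nonsing_inv_mul M hMdet
  have hMiT : M⁻¹ᵀ = M⁻¹ := by rw [Matrix.transpose_nonsing_inv, hMT]
  have hRJR : R⁻¹ * J * R⁻¹ = 1 := by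
    rw [← hRR]
    simp only [Matrix.mul_assoc]
    rw [hRRi, Matrix.mul_one, hRiR]
  -- conjugated sandwich bounds for M
  have hMlow : (M - ξ'⁻¹ • (1 : Matrix (Fin n) (Fin n) ℝ)).PosSemidef := by
    have h := hlow.mul_mul_conjTranspose_same R⁻¹
    rw [Matrix.conjTranspose_eq_transpose_of_trivial, hRiT] at h
    have heq : R⁻¹ * (G - ξ'⁻¹ • J) * R⁻¹ = M - ξ'⁻¹ • (1 : Matrix (Fin n) (Fin n) ℝ) := by
      rw [Matrix.mul_sub, Matrix.sub_mul, Matrix.mul_smul, Matrix.smul_mul, hMdef, hRJR]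
    rwa [heq] at h
  have hMup : ((ξ' * (L / μ)) • (1 : Matrix (Fin n) (Fin n) ℝ) - M).PosSemidef := by
    have h := hup.mul_mul_conjTranspose_same R⁻¹
    rw [Matrix.conjTranspose_eq_transpose_of_trivial, hRiT] at h
    have heq : R⁻¹ * ((ξ' * (L / μ)) • J - G) * R⁻¹
        = (ξ' * (L / μ)) • (1 : Matrix (Fin n) (Fin n) ℝ) - M := by
      rw [Matrix.mul_sub, Matrix.sub_mul, Matrix.mul_smul, Matrix.smul_mul, hMdef, hRJR]
    rwa [heq] at h
  -- square root of M
  obtain ⟨S, hSsd, hSS⟩ := psd_sqrt_exists hMpsd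
  have hST : Sᵀ = S := by rw [← Matrix.conjTranspose_eq_transpose_of_trivial]; exact hSsd.1
  have hSdet : IsUnit S.det := isUnit_det_of_sq hSS hMdet
  set Q : Matrix (Fin n) (Fin n) ℝ := S⁻¹ with hQdef
  have hQS : Q * S = 1 := Matrix.nonsing_inv_mul S hSdet
  have hSQ : S * Q = 1 := Matrix.mul_nonsing_inv S hSdet
  have hQT : Qᵀ = Q := by rw [hQdef, Matrix.transpose_nonsing_inv, hST]
  have hQMQ : Q * M * Q = 1 := by
    rw [← hSS]
    simp only [Matrix.mul_assoc]
    rw [hSQ, Matrix.mul_one, hQS]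
  have hQQ : Q * Q = M⁻¹ := by rw [hQdef, ← Matrix.mul_inv_rev, hSS]
  -- bounds on M⁻¹
  have hinvup : (ξ' • (1 : Matrix (Fin n) (Fin n) ℝ) - M⁻¹).PosSemidef := by
    have hbase : (ξ' • M - 1 : Matrix (Fin n) (Fin n) ℝ).PosSemidef := by
      have := psd_smul' hMlow hξ0.le
      rwa [smul_sub, smul_smul, mul_inv_cancel₀ hξ0.ne', one_smul] at this
    have h := hbase.mul_mul_conjTranspose_same Q
    rw [Matrix.conjTranspose_eq_transpose_of_trivial, hQT] at h
    have heq : Q * (ξ' • M - 1) * Q = ξ' • (1 : Matrix (Fin n) (Fin n) ℝ) - M⁻¹ := by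
      rw [Matrix.mul_sub, Matrix.sub_mul, Matrix.mul_smul, Matrix.smul_mul, hQMQ,
        Matrix.mul_one, hQQ]
    rwa [heq] at h
  have hinvlow : (M⁻¹ - (μ / (ξ' * L)) • (1 : Matrix (Fin n) (Fin n) ℝ)).PosSemidef := by
    have hcinv : (ξ' * (L / μ))⁻¹ = μ / (ξ' * L) := by
      field_simp
    have hbase : ((1 : Matrix (Fin n) (Fin n) ℝ) - (μ / (ξ' * L)) • M).PosSemidef := by
      have := psd_smul' hMup (le_of_lt (by positivity : (0:ℝ) < (ξ' * (L / μ))⁻¹))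
      rwa [smul_sub, smul_smul, inv_mul_cancel₀ (by positivity : (ξ' * (L / μ)) ≠ 0), one_smul,
        hcinv] at this
    have h := hbase.mul_mul_conjTranspose_same Q
    rw [Matrix.conjTranspose_eq_transpose_of_trivial, hQT] at h
    have heq : Q * ((1 : Matrix (Fin n) (Fin n) ℝ) - (μ / (ξ' * L)) • M) * Q
        = M⁻¹ - (μ / (ξ' * L)) • (1 : Matrix (Fin n) (Fin n) ℝ) := by
      rw [Matrix.mul_sub, Matrix.sub_mul, Matrix.mul_smul, Matrix.smul_mul, hQMQ,
        Matrix.mul_one, hQQ]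
    rwa [heq] at h
  -- the symmetric matrix Sm = 1 - M⁻¹ and its quadratic bound
  set Sm : Matrix (Fin n) (Fin n) ℝ := 1 - M⁻¹ with hSmdef
  have hSmT : Smᵀ = Sm := by rw [hSmdef, Matrix.transpose_sub, Matrix.transpose_one, hMiT]
  have hquad : ∀ x : Fin n → ℝ, |x ⬝ᵥ Sm *ᵥ x| ≤ ρ * (x ⬝ᵥ x) := by
    intro x
    have hx : (0:ℝ) ≤ x ⬝ᵥ x := dot_self_nonneg x
    have h1 := hinvup.dotProduct_mulVec_nonneg x
    have h2 := hinvlow.dotProduct_mulVec_nonneg x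
    simp only [star_trivial, Matrix.sub_mulVec, Matrix.smul_mulVec, Matrix.one_mulVec,
      dotProduct_sub, dotProduct_smul, smul_eq_mul] at h1 h2
    have hq : x ⬝ᵥ Sm *ᵥ x = x ⬝ᵥ x - x ⬝ᵥ M⁻¹ *ᵥ x := by
      rw [hSmdef, Matrix.sub_mulVec, Matrix.one_mulVec, dotProduct_sub]
    rw [hq, abs_le]
    constructor
    · have : (ξ' - 1) * (x ⬝ᵥ x) ≤ ρ * (x ⬝ᵥ x) := mul_le_mul_of_nonneg_right hρ1 hx
      nlinarith
    · have : (1 - μ / (ξ' * L)) * (x ⬝ᵥ x) ≤ ρ * (x ⬝ᵥ x) := mul_le_mul_of_nonneg_right hρ2 hx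
      nlinarith
  -- reduction of the two quadratic forms
  set z : Fin n → ℝ := (R⁻¹ * G) *ᵥ u with hzdef
  set B : Matrix (Fin n) (Fin n) ℝ := R⁻¹ * G - R with hBdef
  have hMinv : M⁻¹ = R * G⁻¹ * R := by
    rw [hMdef, Matrix.mul_inv_rev, Matrix.mul_inv_rev, Matrix.nonsing_inv_nonsing_inv R hRdet]
    noncomm_ring
  have hGiG : G⁻¹ * G = 1 := Matrix.nonsing_inv_mul G hGdet
  have hSmRG : Sm * (R⁻¹ * G) = B := by
    have haux : (R * G⁻¹ * R) * (R⁻¹ * G) = R := by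
      simp only [Matrix.mul_assoc]
      rw [← Matrix.mul_assoc R R⁻¹ G, hRRi, Matrix.one_mul, hGiG, Matrix.mul_one]
    rw [hSmdef, hBdef, Matrix.sub_mul, Matrix.one_mul, hMinv, haux]
  have hzS : Sm *ᵥ z = B *ᵥ u := by rw [hzdef, Matrix.mulVec_mulVec, hSmRG]
  have hBT : Bᵀ = G * R⁻¹ - R := by
    rw [hBdef, Matrix.transpose_sub, Matrix.transpose_mul, hGT, hRiT, hRT]
  have hGJRi : (G - J) * R⁻¹ = Bᵀ := by
    rw [Matrix.sub_mul, hBT, ← hRR, Matrix.mul_assoc, hRRi, Matrix.mul_one]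
  have hRiGJ : R⁻¹ * (G - J) = B := by
    rw [Matrix.mul_sub, hBdef, ← hRR, ← Matrix.mul_assoc, hRiR, Matrix.one_mul]
  have hkey : (G - J) * J⁻¹ * (G - J) = Bᵀ * B := by
    calc (G - J) * J⁻¹ * (G - J) = ((G - J) * R⁻¹) * (R⁻¹ * (G - J)) := by
          rw [hJinv]; simp only [Matrix.mul_assoc]
      _ = Bᵀ * B := by rw [hGJRi, hRiGJ]
  have hNum : u ⬝ᵥ ((G - J) * J⁻¹ * (G - J)) *ᵥ u = (Sm *ᵥ z) ⬝ᵥ (Sm *ᵥ z) := by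
    rw [hkey, ← Matrix.mulVec_mulVec, Matrix.dotProduct_mulVec, ← Matrix.mulVec_transpose,
      Matrix.transpose_transpose, hzS]
  have hDen : u ⬝ᵥ (G * J⁻¹ * G) *ᵥ u = z ⬝ᵥ z := by
    have hGG : G * J⁻¹ * G = (R⁻¹ * G)ᵀ * (R⁻¹ * G) := by
      rw [Matrix.transpose_mul, hGT, hRiT, hJinv]
      simp only [Matrix.mul_assoc]
    rw [hGG, ← Matrix.mulVec_mulVec, Matrix.dotProduct_mulVec, ← Matrix.mulVec_transpose,
      Matrix.transpose_transpose, hzdef]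
  have hDpos : 0 < z ⬝ᵥ z := by
    have hunit : IsUnit (R⁻¹ * G) := by
      rw [Matrix.isUnit_iff_isUnit_det, Matrix.det_mul, Matrix.det_nonsing_inv]
      rw [isUnit_iff_ne_zero] at hRdet hGdet ⊢
      simp [hRdet, hGdet]
    have hinj := Matrix.mulVec_injective_iff_isUnit.mpr hunit
    have hzne : z ≠ 0 := by
      intro h0
      apply hu
      apply hinj
      rw [Matrix.mulVec_zero, ← hzdef, h0]
    have h1 : z ⬝ᵥ z ≠ 0 := fun h => hzne (dotProduct_self_eq_zero.mp h)
    exact lt_of_le_of_ne (dot_self_nonneg z) (Ne.symm h1)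
  have hmain : (Sm *ᵥ z) ⬝ᵥ (Sm *ᵥ z) ≤ ρ ^ 2 * (z ⬝ᵥ z) := sym_quad_bound Sm hSmT hρ0 hquad z
  have hfrac : (u ⬝ᵥ ((G - J) * J⁻¹ * (G - J)) *ᵥ u) / (u ⬝ᵥ (G * J⁻¹ * G) *ᵥ u) ≤ ρ ^ 2 := by
    rw [hNum, hDen]
    exact (div_le_iff₀ hDpos).mpr hmain
  calc Real.sqrt ((u ⬝ᵥ ((G - J) * J⁻¹ * (G - J)) *ᵥ u) / (u ⬝ᵥ (G * J⁻¹ * G) *ᵥ u))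
      ≤ Real.sqrt (ρ ^ 2) := Real.sqrt_le_sqrt hfrac
    _ = ρ := Real.sqrt_sq hρ0
end

section
/- If G, A are symmetric positive definite with (1/ξ)A ⪯ G ⪯ ηA (ξ, η ≥ 1) and u ≠ 0, then for α₁ = uᵀGu/(uᵀAu) and β₁ = uᵀAu/(uᵀAG⁻¹Au), one has α₁β₁ - 2β₁ + 1 = uᵀ(G-A)G⁻¹(G-A)u/(uᵀAG⁻¹Au) ≥ θ(A,G,u)²/(ξ³η), where θ(A,G,u) = [uᵀ(G-A)A⁻¹(G-A)u/(uᵀGA⁻¹Gu)]^{1/2}. -/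
open Matrix

section Helpers

variable {n : ℕ}

private lemma vecMul_symm {B : Matrix (Fin n) (Fin n) ℝ} (hB : Bᵀ = B) (u : Fin n → ℝ) :
    u ᵥ* B = B *ᵥ u := by
  conv_lhs => rw [← hB]
  rw [vecMul_transpose]

private lemma dot_symm {M : Matrix (Fin n) (Fin n) ℝ} (hM : Mᵀ = M) (x y : Fin n → ℝ) :
    x ⬝ᵥ M *ᵥ y = y ⬝ᵥ M *ᵥ x := by
  rw [dotProduct_mulVec, vecMul_symm hM, dotProduct_comm]

private lemma conj_dot {B : Matrix (Fin n) (Fin n) ℝ} (M : Matrix (Fin n) (Fin n) ℝ)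
    (hB : Bᵀ = B) (u : Fin n → ℝ) :
    u ⬝ᵥ (B * M * B) *ᵥ u = (B *ᵥ u) ⬝ᵥ M *ᵥ (B *ᵥ u) := by
  simp only [← mulVec_mulVec]
  rw [dotProduct_mulVec, vecMul_symm hB]

private lemma herm_transpose {M : Matrix (Fin n) (Fin n) ℝ} (hM : M.IsHermitian) : Mᵀ = M := by
  simpa using hM.eq

/-- Cauchy–Schwarz for PSD quadratic forms. -/
private lemma cs_psd {M : Matrix (Fin n) (Fin n) ℝ} (hM : M.PosSemidef) (x y : Fin n → ℝ) :
    (x ⬝ᵥ M *ᵥ y) ^ 2 ≤ (x ⬝ᵥ M *ᵥ x) * (y ⬝ᵥ M *ᵥ y) := by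
  have hMT := herm_transpose hM.1
  have h : ∀ t : ℝ, 0 ≤ (y ⬝ᵥ M *ᵥ y) * (t * t) + (2 * (x ⬝ᵥ M *ᵥ y)) * t + x ⬝ᵥ M *ᵥ x := by
    intro t
    have h0 := hM.dotProduct_mulVec_nonneg (x + t • y)
    rw [star_trivial] at h0
    simp only [mulVec_add, mulVec_smul, dotProduct_add, add_dotProduct, dotProduct_smul,
      smul_dotProduct, smul_eq_mul] at h0
    rw [dot_symm hMT x y] at h0 ⊢
    ring_nf at h0 ⊢
    linarith [h0]
  have hd := discrim_le_zero h
  rw [discrim] at hd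
  nlinarith [hd]

/-- If `X ⪯ c • Y` (with `X, Y` posdef, `0 ≤ c`) then `Y⁻¹ ⪯ c • X⁻¹` as quadratic forms. -/
private lemma inv_quad_le_s19 {X Y : Matrix (Fin n) (Fin n) ℝ} (hX : X.PosDef) (hY : Y.PosDef)
    {c : ℝ} (hc0 : 0 ≤ c) (hc : (c • Y - X).PosSemidef) (v : Fin n → ℝ) :
    v ⬝ᵥ Y⁻¹ *ᵥ v ≤ c * (v ⬝ᵥ X⁻¹ *ᵥ v) := by
  have hXdet : IsUnit X.det := isUnit_iff_ne_zero.mpr hX.det_pos.ne'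
  have hYdet : IsUnit Y.det := isUnit_iff_ne_zero.mpr hY.det_pos.ne'
  have hXT := herm_transpose hX.1
  set p := X⁻¹ *ᵥ v with hp
  set q := Y⁻¹ *ᵥ v with hq
  have hXp : X *ᵥ p = v := by
    rw [hp, mulVec_mulVec, mul_nonsing_inv _ hXdet, one_mulVec]
  have hYq : Y *ᵥ q = v := by
    rw [hq, mulVec_mulVec, mul_nonsing_inv _ hYdet, one_mulVec]
  set a := v ⬝ᵥ Y⁻¹ *ᵥ v with ha
  set b := v ⬝ᵥ X⁻¹ *ᵥ v with hb
  have hpXq : p ⬝ᵥ X *ᵥ q = a := by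
    rw [dot_symm hXT, hXp, dotProduct_comm]
  have hpXp : p ⬝ᵥ X *ᵥ p = b := by
    rw [hXp, dotProduct_comm]
  have hqYq : q ⬝ᵥ Y *ᵥ q = a := by
    rw [hYq, dotProduct_comm]
  have hqXq : q ⬝ᵥ X *ᵥ q ≤ c * a := by
    have h0 := hc.dotProduct_mulVec_nonneg q
    rw [star_trivial] at h0
    simp only [sub_mulVec, dotProduct_sub, smul_mulVec, dotProduct_smul,
      smul_eq_mul] at h0
    rw [hqYq] at h0
    linarith
  have hcs := cs_psd hX.posSemidef p q
  rw [hpXq, hpXp] at hcs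
  have ha0 : 0 ≤ a := by
    have := hY.inv.posSemidef.dotProduct_mulVec_nonneg v
    rwa [star_trivial] at this
  have hb0 : 0 ≤ b := by
    have := hX.inv.posSemidef.dotProduct_mulVec_nonneg v
    rwa [star_trivial] at this
  have hqXq0 : 0 ≤ q ⬝ᵥ X *ᵥ q := by
    have := hX.posSemidef.dotProduct_mulVec_nonneg q
    rwa [star_trivial] at this
  rcases ha0.lt_or_eq with h | h
  · nlinarith [mul_le_mul_of_nonneg_left hqXq hb0]
  · rw [← h]
    positivity

end Helpers

private lemma scalar_eq (S T d : ℝ) (hT : T ≠ 0) (hd : d ≠ 0) :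
    S / T * (T / d) - 2 * (T / d) + 1 = (S - T - T + d) / d := by
  field_simp
  ring

private lemma scalar_ineq {ξ η N1 N2 d1 d2 : ℝ} (hξ : 1 ≤ ξ) (hη : 1 ≤ η) (hN1 : 0 ≤ N1)
    (hN2 : 0 ≤ N2) (hd1 : 0 < d1) (hd2 : 0 < d2) (h1 : N2 ≤ η * N1) (h2 : d1 ≤ ξ ^ 3 * d2) :
    N2 / d2 / (ξ ^ 3 * η) ≤ N1 / d1 := by
  have hξ0 : (0:ℝ) < ξ := lt_of_lt_of_le one_pos hξ
  have hη0 : (0:ℝ) < η := lt_of_lt_of_le one_pos hη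
  rw [div_div, div_le_div_iff₀ (by positivity) hd1]
  nlinarith [mul_le_mul h1 h2 hd1.le (by positivity : (0:ℝ) ≤ η * N1)]

theorem alpha_beta_lower_bound {n : ℕ} (A G : Matrix (Fin n) (Fin n) ℝ)
    (hA : A.PosDef) (hG : G.PosDef) (ξ η : ℝ) (hξ : 1 ≤ ξ) (hη : 1 ≤ η)
    (hlow : (G - ξ⁻¹ • A).PosSemidef) (hup : (η • A - G).PosSemidef)
    (u : Fin n → ℝ) (hu : u ≠ 0) :
    let α₁ := (u ⬝ᵥ G.mulVec u) / (u ⬝ᵥ A.mulVec u)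
    let β₁ := (u ⬝ᵥ A.mulVec u) / (u ⬝ᵥ (A * G⁻¹ * A).mulVec u)
    α₁ * β₁ - 2 * β₁ + 1 =
        (u ⬝ᵥ ((G - A) * G⁻¹ * (G - A)).mulVec u) / (u ⬝ᵥ (A * G⁻¹ * A).mulVec u) ∧
      (u ⬝ᵥ ((G - A) * G⁻¹ * (G - A)).mulVec u) / (u ⬝ᵥ (A * G⁻¹ * A).mulVec u) ≥
        theta A G u ^ 2 / (ξ ^ 3 * η) := by
  intro α₁ β₁
  have hξ0 : (0:ℝ) < ξ := lt_of_lt_of_le one_pos hξ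
  have hη0 : (0:ℝ) < η := lt_of_lt_of_le one_pos hη
  have hAT := herm_transpose hA.1
  have hGT := herm_transpose hG.1
  have hGAT : (G - A)ᵀ = G - A := by rw [transpose_sub, hAT, hGT]
  have hGdet : IsUnit G.det := isUnit_iff_ne_zero.mpr hG.det_pos.ne'
  have hAdet : IsUnit A.det := isUnit_iff_ne_zero.mpr hA.det_pos.ne'
  -- abbreviations
  set w := A *ᵥ u with hw
  set y := G *ᵥ u with hy
  set v := (G - A) *ᵥ u with hv
  have hT : (0:ℝ) < u ⬝ᵥ A *ᵥ u := by have := hA.dotProduct_mulVec_pos hu; rwa [star_trivial] at this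
  have hS : (0:ℝ) < u ⬝ᵥ G *ᵥ u := by have := hG.dotProduct_mulVec_pos hu; rwa [star_trivial] at this
  have hwne : w ≠ 0 := by
    intro h
    have := hT
    rw [hw] at h
    rw [h, dotProduct_zero] at this
    exact lt_irrefl _ this
  have hyne : y ≠ 0 := by
    intro h
    have := hS
    rw [hy] at h
    rw [h, dotProduct_zero] at this
    exact lt_irrefl _ this
  -- quadratic form rewrites
  have hD1 : u ⬝ᵥ (A * G⁻¹ * A) *ᵥ u = w ⬝ᵥ G⁻¹ *ᵥ w := conj_dot G⁻¹ hAT u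
  have hN1 : u ⬝ᵥ ((G - A) * G⁻¹ * (G - A)) *ᵥ u = v ⬝ᵥ G⁻¹ *ᵥ v := conj_dot G⁻¹ hGAT u
  have hN2 : u ⬝ᵥ ((G - A) * A⁻¹ * (G - A)) *ᵥ u = v ⬝ᵥ A⁻¹ *ᵥ v := conj_dot A⁻¹ hGAT u
  have hD2 : u ⬝ᵥ (G * A⁻¹ * G) *ᵥ u = y ⬝ᵥ A⁻¹ *ᵥ y := conj_dot A⁻¹ hGT u
  have hd1 : (0:ℝ) < u ⬝ᵥ (A * G⁻¹ * A) *ᵥ u := by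
    rw [hD1]
    have := hG.inv.dotProduct_mulVec_pos hwne
    rwa [star_trivial] at this
  have hd2 : (0:ℝ) < u ⬝ᵥ (G * A⁻¹ * G) *ᵥ u := by
    rw [hD2]
    have := hA.inv.dotProduct_mulVec_pos hyne
    rwa [star_trivial] at this
  have hn1 : (0:ℝ) ≤ u ⬝ᵥ ((G - A) * G⁻¹ * (G - A)) *ᵥ u := by
    rw [hN1]
    have := hG.inv.posSemidef.dotProduct_mulVec_nonneg v
    rwa [star_trivial] at this
  have hn2 : (0:ℝ) ≤ u ⬝ᵥ ((G - A) * A⁻¹ * (G - A)) *ᵥ u := by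
    rw [hN2]
    have := hA.inv.posSemidef.dotProduct_mulVec_nonneg v
    rwa [star_trivial] at this
  constructor
  · -- equality part
    have h1 : G * G⁻¹ = 1 := mul_nonsing_inv _ hGdet
    have h3 : A * G⁻¹ * G = A := by rw [Matrix.mul_assoc, nonsing_inv_mul _ hGdet, Matrix.mul_one]
    have hid : (G - A) * G⁻¹ * (G - A) =
        G * G⁻¹ * G - G * G⁻¹ * A - A * G⁻¹ * G + A * G⁻¹ * A := by noncomm_ring
    rw [h1, h3, Matrix.one_mul, Matrix.one_mul] at hid
    have hq : u ⬝ᵥ ((G - A) * G⁻¹ * (G - A)) *ᵥ u =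
        u ⬝ᵥ G *ᵥ u - u ⬝ᵥ A *ᵥ u - u ⬝ᵥ A *ᵥ u + u ⬝ᵥ (A * G⁻¹ * A) *ᵥ u := by
      rw [hid]
      simp only [sub_mulVec, add_mulVec, dotProduct_sub, dotProduct_add]
    show (u ⬝ᵥ G *ᵥ u) / (u ⬝ᵥ A *ᵥ u) * ((u ⬝ᵥ A *ᵥ u) / (u ⬝ᵥ (A * G⁻¹ * A) *ᵥ u)) -
        2 * ((u ⬝ᵥ A *ᵥ u) / (u ⬝ᵥ (A * G⁻¹ * A) *ᵥ u)) + 1 = _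
    rw [hq]
    exact scalar_eq _ _ _ hT.ne' hd1.ne'
  · -- inequality part
    have hθ : theta A G u ^ 2 =
        (u ⬝ᵥ ((G - A) * A⁻¹ * (G - A)) *ᵥ u) / (u ⬝ᵥ (G * A⁻¹ * G) *ᵥ u) := by
      rw [theta, if_neg hu, Real.sq_sqrt (div_nonneg hn2 hd2.le)]
    -- upper bound hypothesis in smul form
    have heq : ξ • G - A = ξ • (G - ξ⁻¹ • A) := by
      rw [smul_sub, smul_smul, mul_inv_cancel₀ hξ0.ne', one_smul]
    have hξG : (ξ • G - A).PosSemidef := by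
      refine PosSemidef.of_dotProduct_mulVec_nonneg ?_ ?_
      · rw [heq]
        show (ξ • (G - ξ⁻¹ • A))ᴴ = _
        rw [conjTranspose_smul, star_trivial, hlow.1.eq]
      · intro x
        rw [heq, smul_mulVec, dotProduct_smul, smul_eq_mul]
        exact mul_nonneg hξ0.le (by have := hlow.dotProduct_mulVec_nonneg x; rwa [star_trivial] at this)
    -- η-bound on numerator
    have hb1 : v ⬝ᵥ A⁻¹ *ᵥ v ≤ η * (v ⬝ᵥ G⁻¹ *ᵥ v) := inv_quad_le_s19 hG hA hη0.le hup v
    -- ξ-bounds on denominators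
    have hb2 : w ⬝ᵥ G⁻¹ *ᵥ w ≤ ξ * (w ⬝ᵥ A⁻¹ *ᵥ w) := inv_quad_le_s19 hA hG hξ0.le hξG w
    have hb3 : y ⬝ᵥ G⁻¹ *ᵥ y ≤ ξ * (y ⬝ᵥ A⁻¹ *ᵥ y) := inv_quad_le_s19 hA hG hξ0.le hξG y
    have hwA : w ⬝ᵥ A⁻¹ *ᵥ w = u ⬝ᵥ A *ᵥ u := by
      rw [hw, mulVec_mulVec, nonsing_inv_mul _ hAdet, one_mulVec, dotProduct_comm]
    have hyG : y ⬝ᵥ G⁻¹ *ᵥ y = u ⬝ᵥ G *ᵥ u := by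
      rw [hy, mulVec_mulVec, nonsing_inv_mul _ hGdet, one_mulVec, dotProduct_comm]
    have hTS : u ⬝ᵥ A *ᵥ u ≤ ξ * (u ⬝ᵥ G *ᵥ u) := by
      have h0 := hξG.dotProduct_mulVec_nonneg u
      rw [star_trivial] at h0
      simp only [sub_mulVec, dotProduct_sub, smul_mulVec, dotProduct_smul,
        smul_eq_mul] at h0
      linarith
    -- chain: D1 ≤ ξ³ D2
    have hchain : u ⬝ᵥ (A * G⁻¹ * A) *ᵥ u ≤ ξ ^ 3 * (u ⬝ᵥ (G * A⁻¹ * G) *ᵥ u) := by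
      rw [hD1, hD2]
      have h1' : w ⬝ᵥ G⁻¹ *ᵥ w ≤ ξ * (u ⬝ᵥ A *ᵥ u) := by rwa [hwA] at hb2
      have h2' : u ⬝ᵥ G *ᵥ u ≤ ξ * (y ⬝ᵥ A⁻¹ *ᵥ y) := by rw [← hyG]; exact hb3
      calc w ⬝ᵥ G⁻¹ *ᵥ w ≤ ξ * (u ⬝ᵥ A *ᵥ u) := h1'
        _ ≤ ξ * (ξ * (u ⬝ᵥ G *ᵥ u)) := by
            exact mul_le_mul_of_nonneg_left hTS hξ0.le
        _ ≤ ξ * (ξ * (ξ * (y ⬝ᵥ A⁻¹ *ᵥ y))) := by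
            have := mul_le_mul_of_nonneg_left h2' hξ0.le
            exact mul_le_mul_of_nonneg_left this hξ0.le
        _ = ξ ^ 3 * (y ⬝ᵥ A⁻¹ *ᵥ y) := by ring
    -- numerator bound
    have hnum : u ⬝ᵥ ((G - A) * A⁻¹ * (G - A)) *ᵥ u ≤
        η * (u ⬝ᵥ ((G - A) * G⁻¹ * (G - A)) *ᵥ u) := by
      rw [hN1, hN2]; exact hb1
    rw [ge_iff_le, hθ]
    exact scalar_ineq hξ hη hn1 hn2 hd1 hd2 hnum hchain
end
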